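/- Let x be a uniformly recurrent sequence and u, v prefixes of x with u a prefix of v. Then there exists a unique morphism Θ between the corresponding free monoids on return word alphabets satisfying Θ_{x,u} ∘ Θ = Θ_{x,v}. -/

import Mathlib

/-- The factor of the sequence `x` starting at position `i` of length `n`. -/
def seqWord {A : Type*} (x : ℕ → A) (i n : ℕ) : List A :=
  (List.range n).map (fun k => x (i + k))

/-- The word `u` occurs in the sequence `x` at position `i`. -/
def occursAt {A : Type*} (x : ℕ → A) (u : List A) (i : ℕ) : Prop :=
  seqWord x i u.length = u

/-- `u` is a factor of the sequence `x`. -/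
def IsFactor {A : Type*} (x : ℕ → A) (u : List A) : Prop :=
  ∃ i, occursAt x u i

/-- `u` is a prefix of the sequence `x`. -/
def IsPrefixSeq {A : Type*} (u : List A) (x : ℕ → A) : Prop :=
  occursAt x u 0

/-- `x` is uniformly recurrent: every factor occurs in every sufficiently long window. -/
def UnifRec {A : Type*} (x : ℕ → A) : Prop :=
  ∀ u : List A, IsFactor x u → ∃ C, ∀ i, ∃ j, i ≤ j ∧ j < i + C ∧ occursAt x u j

/-- `w` is a return word to `u` in `x`: the factor between two consecutive occurrences of `u`. -/
def IsReturnWord {A : Type*} (x : ℕ → A) (u w : List A) : Prop :=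
  ∃ i j, i < j ∧ occursAt x u i ∧ occursAt x u j ∧
    (∀ k, i < k → k < j → ¬ occursAt x u k) ∧ w = seqWord x i (j - i)

/-- Apply a morphism (given on letters) to a word, by concatenation. -/
def morphApply {I A : Type*} (θ : I → List A) (l : List I) : List A :=
  (l.map θ).flatten

/-- Iterate an endomorphism `σ` of the free monoid `n` times on a word. -/
def morphIter {A : Type*} (σ : A → List A) : ℕ → List A → List A
  | 0, l => l
  | n + 1, l => morphApply σ (morphIter σ n l)

/-- `x` is ultimately periodic. -/
def UltPeriodic {A : Type*} (x : ℕ → A) : Prop :=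
  ∃ p > 0, ∃ N, ∀ n ≥ N, x (n + p) = x n

/-- `x` is linearly recurrent with constant `K`: it is uniformly recurrent and two
successive occurrences of any nonempty factor `u` differ by at most `K * |u|`. -/
def LinRec {A : Type*} (K : ℕ) (x : ℕ → A) : Prop :=
  UnifRec x ∧ ∀ u : List A, u ≠ [] → IsFactor x u →
    ∀ i, occursAt x u i → ∃ j, i < j ∧ j ≤ i + K * u.length ∧ occursAt x u j

/-- `σ` is prolongable on the letter `a`. -/
def Prolongable {A : Type*} (σ : A → List A) (a : A) : Prop :=
  (∃ t, σ a = a :: t ∧ t ≠ []) ∧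
    Filter.Tendsto (fun n => (morphIter σ n [a]).length) Filter.atTop Filter.atTop

/-- `σ` is growing: the image of each letter has length tending to infinity. -/
def Growing {A : Type*} (σ : A → List A) : Prop :=
  ∀ a, Filter.Tendsto (fun n => (morphIter σ n [a]).length) Filter.atTop Filter.atTop

/-- `σ` is primitive: some power sends every letter to a word containing every letter. -/
def Primitive {A : Type*} (σ : A → List A) : Prop :=
  ∃ n > 0, ∀ a b : A, b ∈ morphIter σ n [a]

/-- `x` is the fixed point `σ^∞(a)` of `σ`, prolongable on `a`. -/
def IsFixedPointOf {A : Type*} (σ : A → List A) (a : A) (x : ℕ → A) : Prop :=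
  x 0 = a ∧ ∀ n, IsPrefixSeq (morphIter σ n [a]) x

/-- The word `w` belongs to the language of the endomorphism `σ`. -/
def InLang {A : Type*} (σ : A → List A) (w : List A) : Prop :=
  ∃ a n, w <:+: morphIter σ n [a]

/-- The word `u` occurs at position `i` in the word `w`. -/
def listOccursAt {A : Type*} (w u : List A) (i : ℕ) : Prop :=
  i + u.length ≤ w.length ∧ (w.drop i).take u.length = u

/-- `|σ^k|`: the maximal length of the image of a letter under `σ^k`. -/
def maxLen {A : Type*} [Fintype A] [Nonempty A] (σ : A → List A) (k : ℕ) : ℕ :=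
  Finset.univ.sup' Finset.univ_nonempty (fun a => (morphIter σ k [a]).length)

/-- `⟨σ^k⟩`: the minimal length of the image of a letter under `σ^k`. -/
def minLen {A : Type*} [Fintype A] [Nonempty A] (σ : A → List A) (k : ℕ) : ℕ :=
  Finset.univ.inf' Finset.univ_nonempty (fun a => (morphIter σ k [a]).length)

/-- `(R, θ, z)` is the derived-sequence data of `x` on the prefix `u`: `θ 0, …, θ (R-1)`
enumerate the return words to `u` in order of first appearance in `x`, `z` is the derived
sequence, i.e. the coding of the decomposition of `x` into return words to `u`,
so that `Θ_{x,u}(z) = x`. -/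
def IsDerivedSeq {A : Type*} (x : ℕ → A) (u : List A) (R : ℕ)
    (θ : ℕ → List A) (z : ℕ → ℕ) : Prop :=
  (∀ i < R, IsReturnWord x u (θ i)) ∧
  (∀ w, IsReturnWord x u w → ∃ i < R, θ i = w) ∧
  (∀ i < R, ∀ j < R, i < j →
      sInf {k | occursAt x (θ i) k} < sInf {k | occursAt x (θ j) k}) ∧
  (∀ k, z k < R) ∧
  (∀ n, IsPrefixSeq (morphApply θ (seqWord z 0 n)) x)

lemma seqWord_length {A : Type*} (x : ℕ → A) (i n : ℕ) : (seqWord x i n).length = n := by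
  simp [seqWord]

lemma seqWord_append {A : Type*} (x : ℕ → A) (i m n : ℕ) :
    seqWord x i (m + n) = seqWord x i m ++ seqWord x (i + m) n := by
  simp [seqWord, List.range_add, List.map_map, Function.comp_def, add_assoc]

lemma seqWord_eq_iff {A : Type*} (x : ℕ → A) (r p n : ℕ) :
    seqWord x r n = seqWord x p n ↔ ∀ k < n, x (r + k) = x (p + k) := by
  constructor
  · intro h k hk
    have h2 := congrArg (fun l => l[k]?) h
    simpa [seqWord, hk] using h2
  · intro h
    apply List.ext_getElem (by simp [seqWord_length])
    intro k hk _
    simp only [seqWord, List.getElem_map, List.getElem_range]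
    exact h k (by simpa [seqWord_length] using hk)

lemma occursAt_transfer {A : Type*} {x : ℕ → A} {u : List A} {r p n t : ℕ}
    (hw : seqWord x r n = seqWord x p n) (ht : t + u.length ≤ n)
    (h : occursAt x u (p + t)) : occursAt x u (r + t) := by
  have key : seqWord x (r + t) u.length = seqWord x (p + t) u.length := by
    rw [seqWord_eq_iff] at hw ⊢
    intro k hk
    rw [add_assoc, add_assoc]
    exact hw (t + k) (by omega)
  unfold occursAt at h ⊢
  rw [key, h]

lemma seqWord_take {A : Type*} (x : ℕ → A) (i m n : ℕ) (h : m ≤ n) :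
    (seqWord x i n).take m = seqWord x i m := by
  obtain ⟨k, rfl⟩ := Nat.exists_eq_add_of_le h
  rw [seqWord_append]
  rw [List.take_append_of_le_length (by simp [seqWord_length])]
  simp [seqWord_length]

lemma occursAt_of_prefix {A : Type*} {x : ℕ → A} {u v : List A} {i : ℕ}
    (huv : u <+: v) (h : occursAt x v i) : occursAt x u i := by
  obtain ⟨w, rfl⟩ := huv
  unfold occursAt at h ⊢
  calc seqWord x i u.length = (seqWord x i (u ++ w).length).take u.length := by
        rw [seqWord_take]; simp
    _ = ((u ++ w) : List A).take u.length := by rw [h]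
    _ = u := by simp

lemma window_eq {A : Type*} {x : ℕ → A} {u : List A} {p q : ℕ} (hpq : p ≤ q)
    (hq : occursAt x u q) {r : ℕ} (hseq : seqWord x r (q - p) = seqWord x p (q - p))
    (hre : occursAt x u (r + (q - p))) :
    seqWord x r ((q - p) + u.length) = seqWord x p ((q - p) + u.length) := by
  rw [seqWord_append, seqWord_append, hseq]
  congr 1
  rw [show p + (q - p) = q from by omega]
  exact hre.trans hq.symm

lemma no_middle_occ {A : Type*} {x : ℕ → A} {u w : List A} (hw : IsReturnWord x u w)
    {r : ℕ} (hre : occursAt x u (r + w.length))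
    (hseq : seqWord x r w.length = w) :
    ∀ t, 0 < t → t < w.length → ¬ occursAt x u (r + t) := by
  obtain ⟨p, q, hpq, hp, hq, hcons, rfl⟩ := hw
  have hlen : (seqWord x p (q - p)).length = q - p := seqWord_length _ _ _
  rw [hlen] at hre hseq ⊢
  intro t ht htw hocc
  have hwin := window_eq (u := u) (le_of_lt hpq) hq hseq hre
  have : occursAt x u (p + t) := occursAt_transfer hwin.symm (by omega) hocc
  exact hcons (p + t) (by omega) (by omega) this

lemma occ_start {A : Type*} {x : ℕ → A} {u w : List A} (hw : IsReturnWord x u w)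
    {a : ℕ} (hseq : seqWord x a w.length = w) (hend : occursAt x u (a + w.length)) :
    occursAt x u a := by
  obtain ⟨p, q, hpq, hp, hq, hcons, rfl⟩ := hw
  have hlen : (seqWord x p (q - p)).length = q - p := seqWord_length _ _ _
  rw [hlen] at hend hseq
  have hwin := window_eq (u := u) (le_of_lt hpq) hq hseq hend
  have hp0 : occursAt x u (p + 0) := by simpa using hp
  have := occursAt_transfer (t := 0) hwin (by omega) hp0
  simpa using this

def RWChain {A : Type*} (x : ℕ → A) (u : List A) (θ : ℕ → List A) :
    ℕ → List ℕ → ℕ → Prop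
  | a, [], b => a = b
  | a, j :: l, b => occursAt x u a ∧ seqWord x a (θ j).length = θ j ∧
      RWChain x u θ (a + (θ j).length) l b

lemma rwchain_end {A : Type*} {x : ℕ → A} {u : List A} {θ : ℕ → List A} :
    ∀ {l : List ℕ} {a b : ℕ}, RWChain x u θ a l b →
      b = a + (morphApply θ l).length := by
  intro l
  induction l with
  | nil => intro a b h; simpa [morphApply] using h.symm
  | cons j t ih =>
    intro a b h
    obtain ⟨-, -, hc⟩ := h
    have := ih hc
    simp only [morphApply, List.map_cons, List.flatten_cons, List.length_append]
    simp only [morphApply] at this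
    omega

lemma rwchain_word {A : Type*} {x : ℕ → A} {u : List A} {θ : ℕ → List A} :
    ∀ {l : List ℕ} {a b : ℕ}, RWChain x u θ a l b →
      seqWord x a (b - a) = morphApply θ l := by
  intro l
  induction l with
  | nil => intro a b h; rw [show b = a from h.symm]; simp [seqWord, morphApply]
  | cons j t ih =>
    intro a b h
    obtain ⟨-, hseg, hc⟩ := h
    have hb := rwchain_end hc
    have hb2 : b - a = (θ j).length + (b - (a + (θ j).length)) := by omega
    rw [hb2, seqWord_append, hseg, ih hc]
    simp [morphApply]

lemma rwchain_occ_start {A : Type*} {x : ℕ → A} {u : List A} {θ : ℕ → List A} :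
    ∀ {l : List ℕ} {a b : ℕ}, RWChain x u θ a l b → occursAt x u b →
      occursAt x u a := by
  intro l
  induction l with
  | nil => intro a b h hb; rw [show a = b from h]; exact hb
  | cons j t _ => intro a b h _; exact h.1

lemma exists_chain {A : Type*} {x : ℕ → A} {u : List A} {θ : ℕ → List A} {R : ℕ}
    (hret : ∀ w, IsReturnWord x u w → ∃ i < R, θ i = w) :
    ∀ a b, a ≤ b → occursAt x u a → occursAt x u b →
      ∃ l : List ℕ, (∀ j ∈ l, j < R) ∧ RWChain x u θ a l b := by
  have key : ∀ d a b, b - a = d → a ≤ b → occursAt x u a → occursAt x u b →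
      ∃ l : List ℕ, (∀ j ∈ l, j < R) ∧ RWChain x u θ a l b := by
    intro d
    induction d using Nat.strong_induction_on with
    | _ d ih =>
      intro a b hd hab ha hb
      rcases eq_or_lt_of_le hab with rfl | hlt
      · exact ⟨[], by simp, rfl⟩
      · have hSne : {k | a < k ∧ occursAt x u k}.Nonempty := ⟨b, hlt, hb⟩
        set c := sInf {k | a < k ∧ occursAt x u k} with hcdef
        have hc : a < c ∧ occursAt x u c := Nat.sInf_mem hSne
        have hcb : c ≤ b := Nat.sInf_le ⟨hlt, hb⟩
        have hrw : IsReturnWord x u (seqWord x a (c - a)) := by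
          refine ⟨a, c, hc.1, ha, hc.2, ?_, rfl⟩
          intro k hak hkc hk
          have hle : c ≤ k := by
            rw [hcdef]
            exact Nat.sInf_le (show k ∈ {k | a < k ∧ occursAt x u k} from ⟨hak, hk⟩)
          omega
        obtain ⟨j, hjR, hj⟩ := hret _ hrw
        obtain ⟨l, hl, hchain⟩ := ih (b - c) (by omega) c b rfl hcb hc.2 hb
        have hjlen : (θ j).length = c - a := by rw [hj, seqWord_length]
        refine ⟨j :: l, ?_, ha, ?_, ?_⟩
        · intro j' hj'
          rcases List.mem_cons.mp hj' with rfl | hm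
          · exact hjR
          · exact hl j' hm
        · rw [hjlen, hj]
        · rw [hjlen, show a + (c - a) = c from by omega]
          exact hchain
  intro a b hab ha hb
  exact key (b - a) a b rfl hab ha hb

lemma chain_of_word {A : Type*} {x : ℕ → A} {u : List A} {θ : ℕ → List A} {R : ℕ}
    (hrw : ∀ i < R, IsReturnWord x u (θ i)) :
    ∀ (l : List ℕ) (a b : ℕ), (∀ j ∈ l, j < R) →
      b = a + (morphApply θ l).length →
      seqWord x a (morphApply θ l).length = morphApply θ l → occursAt x u b →
      RWChain x u θ a l b := by
  intro l
  induction l with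
  | nil => intro a b _ hb _ _; simpa [morphApply, RWChain] using hb.symm
  | cons j t ih =>
    intro a b hl hb hseq hob
    have hjR : j < R := hl j List.mem_cons_self
    have hsplit : morphApply θ (j :: t) = θ j ++ morphApply θ t := by
      simp [morphApply]
    rw [hsplit] at hb hseq
    rw [List.length_append] at hb hseq
    rw [seqWord_append] at hseq
    have hlen1 : (seqWord x a (θ j).length).length = (θ j).length :=
      seqWord_length _ _ _
    obtain ⟨hseg, hrest⟩ := List.append_inj hseq hlen1
    have hchain : RWChain x u θ (a + (θ j).length) t b := by
      refine ih (a + (θ j).length) b (fun j' hj' => hl j' (List.mem_cons_of_mem _ hj'))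
        (by omega) hrest hob
    have hmid : occursAt x u (a + (θ j).length) := rwchain_occ_start hchain hob
    exact ⟨occ_start (hrw j hjR) hseg hmid, hseg, hchain⟩

lemma chain_unique {A : Type*} {x : ℕ → A} {u : List A} {θ : ℕ → List A} {R : ℕ}
    (hrw : ∀ i < R, IsReturnWord x u (θ i))
    (hpos : ∀ i < R, 0 < (θ i).length)
    (hinj : ∀ i < R, ∀ j < R, θ i = θ j → i = j) :
    ∀ (l l' : List ℕ) (a b : ℕ), (∀ j ∈ l, j < R) → (∀ j ∈ l', j < R) →
      RWChain x u θ a l b → RWChain x u θ a l' b → occursAt x u b → l = l' := by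
  intro l
  induction l with
  | nil =>
    intro l' a b _ hl' h h' hob
    have hab : a = b := h
    cases l' with
    | nil => rfl
    | cons j' t' =>
      obtain ⟨_, _, hc⟩ := h'
      have := rwchain_end hc
      have hp := hpos j' (hl' j' List.mem_cons_self)
      omega
  | cons j t ih =>
    intro l' a b hl hl' h h' hob
    cases l' with
    | nil =>
      have hab : a = b := h'
      obtain ⟨_, _, hc⟩ := h
      have := rwchain_end hc
      have hp := hpos j (hl j List.mem_cons_self)
      omega
    | cons j' t' =>
      obtain ⟨ha, hseg, hc⟩ := h
      obtain ⟨-, hseg', hc'⟩ := h'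
      have hjR : j < R := hl j List.mem_cons_self
      have hj'R : j' < R := hl' j' List.mem_cons_self
      have hmid : occursAt x u (a + (θ j).length) := rwchain_occ_start hc hob
      have hmid' : occursAt x u (a + (θ j').length) := rwchain_occ_start hc' hob
      have hlenEq : (θ j).length = (θ j').length := by
        by_contra hne
        rcases Nat.lt_or_ge (θ j).length (θ j').length with hlt | hge
        · exact no_middle_occ (hrw j' hj'R) hmid' hseg' (θ j).length
            (hpos j hjR) hlt hmid
        · have hlt' : (θ j').length < (θ j).length := by omega
          exact no_middle_occ (hrw j hjR) hmid hseg (θ j').length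
            (hpos j' hj'R) hlt' hmid'
      have hje : j = j' := hinj j hjR j' hj'R (by rw [← hseg, ← hseg', hlenEq])
      subst hje
      have ht : t = t' :=
        ih t' (a + (θ j).length) b (fun a ha => hl a (List.mem_cons_of_mem _ ha))
          (fun a ha => hl' a (List.mem_cons_of_mem _ ha)) hc hc' hob
      rw [ht]

/-- Corollary (Durand 1998): let `x` be uniformly recurrent, `u` and `v` prefixes of `x`
with `u` a non-empty prefix of `v`. Let `(Ru, θu, zu)` and `(Rv, θv, zv)` be the
derived-sequence data on `u` and `v`. Then there exists a unique morphism
`Θ : R_{x,v}* → R_{x,u}*` satisfying `Θ_{x,u} ∘ Θ = Θ_{x,v}`. -/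
theorem exists_unique_connecting_morphism {A : Type*} [Fintype A] (x : ℕ → A)
    (hur : UnifRec x) (u v : List A) (hu : u ≠ [])
    (hup : IsPrefixSeq u x) (hvp : IsPrefixSeq v x) (huv : u <+: v)
    (Ru : ℕ) (θu : ℕ → List A) (zu : ℕ → ℕ) (hdu : IsDerivedSeq x u Ru θu zu)
    (Rv : ℕ) (θv : ℕ → List A) (zv : ℕ → ℕ) (hdv : IsDerivedSeq x v Rv θv zv) :
    ∃! Θ : Fin Rv → List (Fin Ru),
      ∀ i : Fin Rv, morphApply (fun j : Fin Ru => θu j.val) (Θ i) = θv i.val := by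
  obtain ⟨hu_rw, hu_complete, hu_order, -, -⟩ := hdu
  obtain ⟨hv_rw, -, -, -, -⟩ := hdv
  have hinj : ∀ i < Ru, ∀ j < Ru, θu i = θu j → i = j := by
    intro i hi j hj hij
    by_contra hne
    rcases Nat.lt_or_ge i j with h | h
    · have h2 := hu_order i hi j hj h
      rw [hij] at h2
      exact lt_irrefl _ h2
    · have h2 := hu_order j hj i hi (by omega)
      rw [hij] at h2
      exact lt_irrefl _ h2
  have hpos : ∀ j < Ru, 0 < (θu j).length := by
    intro j hj
    obtain ⟨p, q, hpq, -, -, -, hw⟩ := hu_rw j hj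
    rw [hw, seqWord_length]; omega
  have main : ∀ i : Fin Rv, ∃! l : List (Fin Ru),
      morphApply (fun j : Fin Ru => θu j.val) l = θv i.val := by
    intro i
    obtain ⟨a, b, hab, hva, hvb, -, hweq⟩ := hv_rw i.val i.isLt
    have hua : occursAt x u a := occursAt_of_prefix huv hva
    have hub : occursAt x u b := occursAt_of_prefix huv hvb
    obtain ⟨l, hlR, hchain⟩ := exists_chain hu_complete a b (le_of_lt hab) hua hub
    have hword : morphApply θu l = θv i.val := by
      rw [← rwchain_word hchain, hweq]
    have hlenv : (θv i.val).length = b - a := by rw [hweq, seqWord_length]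
    refine ⟨l.pmap (fun j h => (⟨j, h⟩ : Fin Ru)) hlR, ?_, ?_⟩
    · have hpm : morphApply (fun j : Fin Ru => θu j.val)
          (l.pmap (fun j h => (⟨j, h⟩ : Fin Ru)) hlR) = morphApply θu l := by
        simp [morphApply, List.map_pmap, List.pmap_eq_map]
      exact hpm.trans hword
    · intro y hy
      have hyR : ∀ j ∈ y.map (Fin.val), j < Ru := by
        intro j hj
        simp only [List.mem_map] at hj
        obtain ⟨j', -, rfl⟩ := hj
        exact j'.isLt
      have hyword : morphApply θu (y.map Fin.val) = θv i.val := by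
        rw [← hy]; simp [morphApply, List.map_map, Function.comp_def]
      have hychain : RWChain x u θu a (y.map Fin.val) b := by
        refine chain_of_word hu_rw _ a b hyR ?_ ?_ hub
        · rw [hyword, hlenv]; omega
        · rw [hyword, hlenv]; exact hweq.symm
      have hmapeq : y.map Fin.val = l :=
        chain_unique hu_rw hpos hinj (y.map Fin.val) l a b hyR hlR hychain hchain hub
      have hmapeq2 : y.map Fin.val
          = (l.pmap (fun j h => (⟨j, h⟩ : Fin Ru)) hlR).map Fin.val := by
        rw [hmapeq]
        simp [List.map_pmap, List.pmap_eq_map]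
      exact List.map_injective_iff.mpr Fin.val_injective hmapeq2
  refine ⟨fun i => (main i).choose, fun i => (main i).choose_spec.1, ?_⟩
  intro Θ' h'
  funext i
  exact (main i).choose_spec.2 _ (h' i)
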